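/- arXiv:0905.0126 — 5 statements merged into one kernel-verified Lean document; each statement's English description precedes it below -/
import Mathlib

section
/- Let R = [a₁, b₁] × [a₂, b₂] be a closed rectangle in ℝ² with a₁ < b₁ and a₂ < b₂. Let φ : ℝ² → ℝ be continuous on R and differentiable on its interior, and let η : ℝ² → ℝ be twice continuously differentiable on an open neighborhood of R. Suppose η is constant on the boundary ∂R. Then ∫_R ( (∂φ/∂x)(∂η/∂y) − (∂φ/∂y)(∂η/∂x) ) dV = 0, i.e. ∫_R ∇φ · ∇^⊥η dV = 0. -/
open MeasureTheory
open Set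

/-- The key integral identity in the proof of the paper's Steady Geostrophic States
theorem, on a rectangle `R = [a₁,b₁] × [a₂,b₂]`: if `φ` is continuous on `R` and
differentiable on its interior, `η` is `C²` on a neighbourhood of `R`, and `η` is
constant on the boundary `∂R`, then `∫_R ∇φ · ∇^⊥η dV = 0`, i.e.
`∫_R (φ_x η_y − φ_y η_x) dV = 0`. -/
theorem jacobian_integral_rectangle
    (a₁ b₁ a₂ b₂ : ℝ) (h1 : a₁ < b₁) (h2 : a₂ < b₂)
    (R : Set (ℝ × ℝ)) (hR : R = Set.Icc a₁ b₁ ×ˢ Set.Icc a₂ b₂)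
    (φ : ℝ × ℝ → ℝ) (hφc : ContinuousOn φ R)
    (hφd : ∀ q ∈ interior R, DifferentiableAt ℝ φ q)
    (η : ℝ × ℝ → ℝ)
    (hη : ∃ U : Set (ℝ × ℝ), IsOpen U ∧ R ⊆ U ∧ ContDiffOn ℝ 2 η U)
    (hconst : ∃ c : ℝ, ∀ q ∈ frontier R, η q = c) :
    ∫ q in R, (fderiv ℝ φ q (1, 0) * fderiv ℝ η q (0, 1)
      - fderiv ℝ φ q (0, 1) * fderiv ℝ η q (1, 0)) = 0 := by
  subst hR
  obtain ⟨U, hU, hRU, hC⟩ := hη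
  obtain ⟨c, hc⟩ := hconst
  set Dη := fderiv ℝ η with hDη
  set D2 := fderiv ℝ Dη with hD2
  set F : ℝ × ℝ → ℝ := fun q =>
    fderiv ℝ φ q (1, 0) * Dη q (0, 1) - fderiv ℝ φ q (0, 1) * Dη q (1, 0) with hF
  -- basic facts about η on U
  have hηd : ∀ q ∈ U, DifferentiableAt ℝ η q := fun q hq =>
    ((hC q hq).contDiffAt (hU.mem_nhds hq)).differentiableAt two_ne_zero
  have hDη1 : ContDiffOn ℝ 1 Dη U := hC.fderiv_of_isOpen hU (by norm_num)
  have hDηd : ∀ q ∈ U, DifferentiableAt ℝ Dη q := fun q hq =>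
    ((hDη1 q hq).contDiffAt (hU.mem_nhds hq)).differentiableAt one_ne_zero
  have hsymm : ∀ q ∈ U, ∀ v w, D2 q v w = D2 q w v := fun q hq =>
    ((hC q hq).contDiffAt (hU.mem_nhds hq)).isSymmSndFDerivAt (by simp)
  have hDηc : ContinuousOn Dη U := hC.continuousOn_fderiv_of_isOpen hU one_le_two
  -- set up the divergence theorem data
  set R : Set (ℝ × ℝ) := Set.Icc a₁ b₁ ×ˢ Set.Icc a₂ b₂ with hRdef
  have hRIcc : R = Set.Icc (a₁, a₂) (b₁, b₂) := by
    rw [hRdef, Icc_prod_eq]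
  have hintR : interior R = Ioo a₁ b₁ ×ˢ Ioo a₂ b₂ := by
    rw [hRdef, interior_prod_eq, interior_Icc, interior_Icc]
  -- vanishing of tangential derivatives on open edges
  have edgey : ∀ x₀ ∈ Set.Icc a₁ b₁, ∀ t ∈ Ioo a₂ b₂, (x₀ = a₁ ∨ x₀ = b₁) →
      Dη (x₀, t) (0, 1) = 0 := by
    intro x₀ hx₀ t ht hedge
    have hmem : (x₀, t) ∈ R := ⟨hx₀, Ioo_subset_Icc_self ht⟩
    have hd : HasDerivAt (fun s => η (x₀, s)) (Dη (x₀, t) (0, 1)) t := by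
      have h1 : HasDerivAt (fun s : ℝ => ((x₀ : ℝ), s)) ((0 : ℝ), (1 : ℝ)) t := by
        simpa using (hasDerivAt_const t x₀).prodMk (hasDerivAt_id t)
      exact (hηd _ (hRU hmem)).hasFDerivAt.comp_hasDerivAt t h1
    have hev : (fun s => η (x₀, s)) =ᶠ[nhds t] fun _ => c := by
      filter_upwards [Ioo_mem_nhds ht.1 ht.2] with s hs
      refine hc _ ?_
      rw [(isClosed_Icc.prod isClosed_Icc).frontier_eq]
      refine ⟨⟨hx₀, Ioo_subset_Icc_self hs⟩, ?_⟩
      rw [hintR]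
      rintro ⟨hx1, -⟩
      rcases hedge with rfl | rfl
      · exact lt_irrefl _ hx1.1
      · exact lt_irrefl _ hx1.2
    have h0 : HasDerivAt (fun s => η (x₀, s)) 0 t :=
      (hasDerivAt_const t c).congr_of_eventuallyEq hev
    exact hd.unique h0
  have edgex : ∀ y₀ ∈ Set.Icc a₂ b₂, ∀ t ∈ Ioo a₁ b₁, (y₀ = a₂ ∨ y₀ = b₂) →
      Dη (t, y₀) (1, 0) = 0 := by
    intro y₀ hy₀ t ht hedge
    have hmem : (t, y₀) ∈ R := ⟨Ioo_subset_Icc_self ht, hy₀⟩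
    have hd : HasDerivAt (fun s => η (s, y₀)) (Dη (t, y₀) (1, 0)) t := by
      have h1 : HasDerivAt (fun s : ℝ => (s, (y₀ : ℝ))) ((1 : ℝ), (0 : ℝ)) t := by
        simpa using (hasDerivAt_id t).prodMk (hasDerivAt_const t y₀)
      exact (hηd _ (hRU hmem)).hasFDerivAt.comp_hasDerivAt t h1
    have hev : (fun s => η (s, y₀)) =ᶠ[nhds t] fun _ => c := by
      filter_upwards [Ioo_mem_nhds ht.1 ht.2] with s hs
      refine hc _ ?_
      rw [(isClosed_Icc.prod isClosed_Icc).frontier_eq]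
      refine ⟨⟨Ioo_subset_Icc_self hs, hy₀⟩, ?_⟩
      rw [hintR]
      rintro ⟨-, hy1⟩
      rcases hedge with rfl | rfl
      · exact lt_irrefl _ hy1.1
      · exact lt_irrefl _ hy1.2
    have h0 : HasDerivAt (fun s => η (s, y₀)) 0 t :=
      (hasDerivAt_const t c).congr_of_eventuallyEq hev
    exact hd.unique h0
  -- the divergence theorem setup
  set f : ℝ × ℝ → ℝ := fun q => φ q * Dη q (0, 1) with hf
  set g : ℝ × ℝ → ℝ := fun q => -(φ q * Dη q (1, 0)) with hg
  set f' : ℝ × ℝ → ℝ × ℝ →L[ℝ] ℝ := fun q =>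
    φ q • ((D2 q).flip (0, 1)) + Dη q (0, 1) • fderiv ℝ φ q with hf'
  set g' : ℝ × ℝ → ℝ × ℝ →L[ℝ] ℝ := fun q =>
    -(φ q • ((D2 q).flip (1, 0)) + Dη q (1, 0) • fderiv ℝ φ q) with hg'
  have hkey : ∀ q ∈ R, f' q (1, 0) + g' q (0, 1) = F q := by
    intro q hq
    have := hsymm q (hRU hq) (1, 0) (0, 1)
    simp only [hf', hg', hF, ContinuousLinearMap.add_apply, ContinuousLinearMap.neg_apply,
      ContinuousLinearMap.smul_apply, ContinuousLinearMap.flip_apply, smul_eq_mul]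
    rw [this]; ring
  have Hdf : ∀ q ∈ Ioo a₁ b₁ ×ˢ Ioo a₂ b₂, HasFDerivAt f (f' q) q := by
    intro q hq
    have hqU : q ∈ U := hRU ⟨Ioo_subset_Icc_self hq.1, Ioo_subset_Icc_self hq.2⟩
    have h1 : HasFDerivAt (fun p => Dη p (0, 1)) ((D2 q).flip (0, 1)) q := by
      have := (hDηd q hqU).hasFDerivAt.clm_apply (hasFDerivAt_const ((0 : ℝ), (1 : ℝ)) q)
      simpa using this
    have h2 : HasFDerivAt φ (fderiv ℝ φ q) q :=
      (hφd q (hintR ▸ hq)).hasFDerivAt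
    exact h2.mul h1
  have Hdg : ∀ q ∈ Ioo a₁ b₁ ×ˢ Ioo a₂ b₂, HasFDerivAt g (g' q) q := by
    intro q hq
    have hqU : q ∈ U := hRU ⟨Ioo_subset_Icc_self hq.1, Ioo_subset_Icc_self hq.2⟩
    have h1 : HasFDerivAt (fun p => Dη p (1, 0)) ((D2 q).flip (1, 0)) q := by
      have := (hDηd q hqU).hasFDerivAt.clm_apply (hasFDerivAt_const ((1 : ℝ), (0 : ℝ)) q)
      simpa using this
    have h2 : HasFDerivAt φ (fderiv ℝ φ q) q :=
      (hφd q (hintR ▸ hq)).hasFDerivAt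
    exact (h2.mul h1).neg
  have Hcf : ContinuousOn f R :=
    hφc.mul ((hDηc.mono hRU).clm_apply continuousOn_const)
  have Hcg : ContinuousOn g R :=
    (hφc.mul ((hDηc.mono hRU).clm_apply continuousOn_const)).neg
  by_cases Hi : IntegrableOn F R
  · have Hi' : IntegrableOn (fun q => f' q (1, 0) + g' q (0, 1)) R :=
      Hi.congr_fun (fun q hq => (hkey q hq).symm) (measurableSet_Icc.prod measurableSet_Icc)
    have hdiv := integral_divergence_prod_Icc_of_hasFDerivAt_off_countable_of_le
      f g f' g' (a₁, a₂) (b₁, b₂) (by exact ⟨h1.le, h2.le⟩) ∅ countable_empty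
      (hRIcc ▸ Hcf) (hRIcc ▸ Hcg)
      (fun q hq => Hdf q hq.1) (fun q hq => Hdg q hq.1) (hRIcc ▸ Hi')
    have hFi : ∫ q in R, F q = ∫ q in R, (f' q (1, 0) + g' q (0, 1)) :=
      setIntegral_congr_fun (measurableSet_Icc.prod measurableSet_Icc)
        (fun q hq => (hkey q hq).symm)
    rw [hF] at hFi
    rw [hFi, hRIcc, hdiv]
    -- the four boundary integrals vanish
    have e1 : ∫ x in a₁..b₁, g (x, b₂) = 0 := by
      rw [intervalIntegral.integral_of_le h1.le,
        ← setIntegral_congr_set (Ioo_ae_eq_Ioc (a := a₁) (b := b₁)),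
        setIntegral_congr_fun measurableSet_Ioo
          (g := fun _ => (0 : ℝ)) (fun x hx => by
            simp [hg, edgex b₂ ⟨h2.le, le_rfl⟩ x hx (Or.inr rfl)]),
        integral_zero]
    have e2 : ∫ x in a₁..b₁, g (x, a₂) = 0 := by
      rw [intervalIntegral.integral_of_le h1.le,
        ← setIntegral_congr_set (Ioo_ae_eq_Ioc (a := a₁) (b := b₁)),
        setIntegral_congr_fun measurableSet_Ioo
          (g := fun _ => (0 : ℝ)) (fun x hx => by
            simp [hg, edgex a₂ ⟨le_rfl, h2.le⟩ x hx (Or.inl rfl)]),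
        integral_zero]
    have e3 : ∫ y in a₂..b₂, f (b₁, y) = 0 := by
      rw [intervalIntegral.integral_of_le h2.le,
        ← setIntegral_congr_set (Ioo_ae_eq_Ioc (a := a₂) (b := b₂)),
        setIntegral_congr_fun measurableSet_Ioo
          (g := fun _ => (0 : ℝ)) (fun y hy => by
            simp [hf, edgey b₁ ⟨h1.le, le_rfl⟩ y hy (Or.inr rfl)]),
        integral_zero]
    have e4 : ∫ y in a₂..b₂, f (a₁, y) = 0 := by
      rw [intervalIntegral.integral_of_le h2.le,
        ← setIntegral_congr_set (Ioo_ae_eq_Ioc (a := a₂) (b := b₂)),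
        setIntegral_congr_fun measurableSet_Ioo
          (g := fun _ => (0 : ℝ)) (fun y hy => by
            simp [hf, edgey a₁ ⟨le_rfl, h1.le⟩ y hy (Or.inl rfl)]),
        integral_zero]
    rw [e1, e2, e3, e4]; ring
  · exact integral_undef Hi
end

section
/- Let Ω ⊆ ℝ² be a measurable set, V a linear subspace of L²(Ω; ℝ²), and H a set of functions φ : ℝ² → ℝ that are differentiable on Ω with the equivalence class of ∇φ restricted to Ω belonging to V. Suppose there is a constant λ > 0 such that ∫_Ω |∇φ|² dV ≥ λ ∫_Ω φ² dV for every φ ∈ H. Then for every φ ∈ H that is not zero almost everywhere on Ω, sup over nonzero w ∈ V of ( ∫_Ω w · ∇φ dV ) / ( ∫_Ω |w|² dV )^{1/2} ≥ √λ · ( ∫_Ω φ² dV )^{1/2}. -/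
open MeasureTheory RealInnerProductSpace
set_option maxHeartbeats 1000000

lemma norm_toLp_eq_sqrt {α E : Type*} [MeasurableSpace α] [NormedAddCommGroup E]
    [InnerProductSpace ℝ E] {μ : Measure α} {f : α → E} (hf : MemLp f 2 μ) :
    ‖hf.toLp f‖ = Real.sqrt (∫ x, ‖f x‖ ^ 2 ∂μ) := by
  have h1 : ‖hf.toLp f‖ ^ 2 = ∫ x, ‖f x‖ ^ 2 ∂μ := by
    rw [← real_inner_self_eq_norm_sq, L2.inner_def]
    apply integral_congr_ae
    filter_upwards [hf.coeFn_toLp] with x hx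
    rw [hx, real_inner_self_eq_norm_sq]
  rw [← h1, Real.sqrt_sq (norm_nonneg _)]

/-- The paper's Inf-Sup Theorem: if the finite element pair `(H, V)` satisfies the
embedding condition `∇H ⊆ V` and the Rayleigh-quotient lower bound
`∫_Ω |∇φ|² ≥ λ ∫_Ω φ²` holds for all `φ ∈ H` with a constant `λ > 0`, then the inf-sup
condition holds with constant `β = √λ`: for every `φ ∈ H` not a.e. zero,
`sup_{w ∈ V, w ≠ 0} (∫_Ω w · ∇φ) / ‖w‖_{L²} ≥ √λ · ‖φ‖_{L²}`. -/
theorem infsup_theorem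
    (Ω : Set (EuclideanSpace ℝ (Fin 2))) (hΩ : MeasurableSet Ω)
    (V : Submodule ℝ (EuclideanSpace ℝ (Fin 2) → EuclideanSpace ℝ (Fin 2)))
    (hV : ∀ w ∈ V, MemLp w 2 (volume.restrict Ω))
    (H : Set (EuclideanSpace ℝ (Fin 2) → ℝ))
    (hH : ∀ φ ∈ H, (∀ x ∈ Ω, DifferentiableAt ℝ φ x) ∧
      ∃ gφ ∈ V, gφ =ᵐ[volume.restrict Ω] fun x => gradient φ x)
    (lam : ℝ) (hlam : 0 < lam)
    (hRayleigh : ∀ φ ∈ H,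
      lam * ∫ x in Ω, (φ x) ^ 2 ≤ ∫ x in Ω, ‖gradient φ x‖ ^ 2) :
    ∀ φ ∈ H, ¬ (φ =ᵐ[volume.restrict Ω] (0 : EuclideanSpace ℝ (Fin 2) → ℝ)) →
      Real.sqrt lam * Real.sqrt (∫ x in Ω, (φ x) ^ 2) ≤
        sSup {r : ℝ | ∃ w ∈ V,
          ¬ (w =ᵐ[volume.restrict Ω] (0 : EuclideanSpace ℝ (Fin 2) → EuclideanSpace ℝ (Fin 2))) ∧
          r = (∫ x in Ω, ⟪w x, gradient φ x⟫) / Real.sqrt (∫ x in Ω, ‖w x‖ ^ 2)} := by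
  intro φ hφ hφne
  set μ := volume.restrict Ω with hμ
  obtain ⟨-, gφ, hgV, hae⟩ := hH φ hφ
  set S : Set ℝ := {r : ℝ | ∃ w ∈ V,
      ¬ (w =ᵐ[μ] (0 : EuclideanSpace ℝ (Fin 2) → EuclideanSpace ℝ (Fin 2))) ∧
      r = (∫ x in Ω, ⟪w x, gradient φ x⟫) / Real.sqrt (∫ x in Ω, ‖w x‖ ^ 2)} with hS
  -- symmetry of S
  have hsymm : ∀ r ∈ S, -r ∈ S := by
    rintro r ⟨w, hw, hwne, rfl⟩
    refine ⟨-w, neg_mem hw, ?_, ?_⟩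
    · intro h
      apply hwne
      filter_upwards [h] with x hx
      have : -(w x) = 0 := hx
      simpa using neg_eq_zero.mp this
    · have h1 : (∫ x in Ω, ⟪(-w) x, gradient φ x⟫) = -∫ x in Ω, ⟪w x, gradient φ x⟫ := by
        rw [← integral_neg]
        apply integral_congr_ae
        filter_upwards with x
        simp [inner_neg_left]
      have h2 : (∫ x in Ω, ‖(-w) x‖ ^ 2) = ∫ x in Ω, ‖w x‖ ^ 2 := by
        apply integral_congr_ae
        filter_upwards with x
        simp
      rw [h1, h2, neg_div]
  have hg2 : MemLp gφ 2 μ := hV gφ hgV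
  set G : Lp (EuclideanSpace ℝ (Fin 2)) 2 μ := hg2.toLp gφ with hG
  have hA : (∫ x in Ω, ‖gradient φ x‖ ^ 2) = ∫ x in Ω, ‖gφ x‖ ^ 2 := by
    apply integral_congr_ae
    filter_upwards [hae] with x hx
    rw [hx]
  have hGnorm : ‖G‖ = Real.sqrt (∫ x in Ω, ‖gφ x‖ ^ 2) := norm_toLp_eq_sqrt hg2
  -- every element of S is bounded by ‖G‖
  have hbound : ∀ r ∈ S, r ≤ ‖G‖ := by
    rintro r ⟨w, hw, hwne, rfl⟩
    have hw2 : MemLp w 2 μ := hV w hw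
    set W : Lp (EuclideanSpace ℝ (Fin 2)) 2 μ := hw2.toLp w with hW
    have hWnorm : ‖W‖ = Real.sqrt (∫ x in Ω, ‖w x‖ ^ 2) := norm_toLp_eq_sqrt hw2
    have hinner : (∫ x in Ω, ⟪w x, gradient φ x⟫) = ⟪W, G⟫ := by
      rw [L2.inner_def]
      apply integral_congr_ae
      filter_upwards [hae, hw2.coeFn_toLp, hg2.coeFn_toLp] with x hx hwx hgx
      rw [hwx, hgx, ← hx]
    have hDnonneg : (0:ℝ) ≤ ∫ x in Ω, ‖w x‖ ^ 2 :=
      integral_nonneg fun x => by positivity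
    have hDpos : 0 < Real.sqrt (∫ x in Ω, ‖w x‖ ^ 2) := by
      rcases lt_or_eq_of_le hDnonneg with h | h
      · exact Real.sqrt_pos.mpr h
      · exfalso
        apply hwne
        have hWzero : W = 0 := by
          have : ‖W‖ = 0 := by rw [hWnorm, ← h, Real.sqrt_zero]
          exact norm_eq_zero.mp this
        have hWae : (W : _ → _) =ᵐ[μ] 0 := (Lp.eq_zero_iff_ae_eq_zero).mp hWzero
        filter_upwards [hw2.coeFn_toLp, hWae] with x h1 h2
        rw [← h1, h2]
    rw [hinner, div_le_iff₀ hDpos, ← hWnorm]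
    exact (real_inner_le_norm W G).trans_eq (mul_comm _ _)
  have hBdd : BddAbove S := ⟨‖G‖, hbound⟩
  by_cases hP : (∫ x in Ω, (φ x) ^ 2) ≤ 0
  · -- LHS is zero; show sSup S ≥ 0
    have hsq : Real.sqrt (∫ x in Ω, (φ x) ^ 2) = 0 := Real.sqrt_eq_zero'.mpr hP
    rw [hsq, mul_zero]
    by_cases hSne : S.Nonempty
    · obtain ⟨r, hr⟩ := hSne
      have h1 := le_csSup hBdd hr
      have h2 := le_csSup hBdd (hsymm r hr)
      linarith
    · rw [Set.not_nonempty_iff_eq_empty.mp hSne, Real.sSup_empty]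
  · push_neg at hP
    have hA2 : lam * ∫ x in Ω, (φ x) ^ 2 ≤ ∫ x in Ω, ‖gφ x‖ ^ 2 := by
      rw [← hA]; exact hRayleigh φ hφ
    have hApos : 0 < ∫ x in Ω, ‖gφ x‖ ^ 2 := lt_of_lt_of_le (by positivity) hA2
    have hgne : ¬ (gφ =ᵐ[μ] (0 : EuclideanSpace ℝ (Fin 2) → EuclideanSpace ℝ (Fin 2))) := by
      intro h
      have : (∫ x in Ω, ‖gφ x‖ ^ 2) = 0 := by
        rw [show (∫ x in Ω, ‖gφ x‖ ^ 2) = ∫ x in Ω, (0:ℝ) from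
          integral_congr_ae (by filter_upwards [h] with x hx; simp [hx])]
        simp
      linarith
    have hmem : Real.sqrt (∫ x in Ω, ‖gφ x‖ ^ 2) ∈ S := by
      refine ⟨gφ, hgV, hgne, ?_⟩
      have h1 : (∫ x in Ω, ⟪gφ x, gradient φ x⟫) = ∫ x in Ω, ‖gφ x‖ ^ 2 := by
        apply integral_congr_ae
        filter_upwards [hae] with x hx
        rw [← hx, real_inner_self_eq_norm_sq]
      rw [h1, Real.div_sqrt]
    calc Real.sqrt lam * Real.sqrt (∫ x in Ω, (φ x) ^ 2)
        = Real.sqrt (lam * ∫ x in Ω, (φ x) ^ 2) := (Real.sqrt_mul hlam.le _).symm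
      _ ≤ Real.sqrt (∫ x in Ω, ‖gφ x‖ ^ 2) := Real.sqrt_le_sqrt hA2
      _ ≤ sSup S := le_csSup hBdd hmem
end

section
/- Let Ω ⊆ ℝ³ be a measurable set and let V be a linear subspace of L²(Ω; ℝ³) that is closed under the map w ↦ k × w, where k = (0, 0, 1). Let p : ℝ³ → ℝ be differentiable on Ω with the equivalence class of ∇p restricted to Ω belonging to V, let T ∈ L²(Ω; ℝ) be such that the vertical field (0, 0, T) belongs to V, and let u ∈ V. Let f, γ be real constants and ρ₀ > 0. If f ∫_Ω w · (k × u) dV = −(1/ρ₀) ∫_Ω w · ∇p dV + γ ∫_Ω w₃ T dV for every w = (w₁, w₂, w₃) ∈ V, then f k × u = −(1/ρ₀) ∇p + γ T k almost everywhere on Ω; in particular the horizontal components satisfy −f u₂ = −(1/ρ₀) ∂p/∂x and f u₁ = −(1/ρ₀) ∂p/∂y a.e. (geostrophic balance) and the vertical component satisfies (1/ρ₀) ∂p/∂z = γ T a.e. (hydrostatic balance). -/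
open MeasureTheory RealInnerProductSpace

lemma integrable_inner_of_memL2 {α E : Type*} [MeasurableSpace α] {μ : Measure α}
    [NormedAddCommGroup E] [InnerProductSpace ℝ E] {a b : α → E}
    (ha : MemLp a 2 μ) (hb : MemLp b 2 μ) :
    Integrable (fun x => ⟪a x, b x⟫) μ := by
  have h := L2.integrable_inner (𝕜 := ℝ) (ha.toLp a) (hb.toLp b)
  refine h.congr ?_
  filter_upwards [ha.coeFn_toLp, hb.coeFn_toLp] with x hx hx'
  rw [hx, hx']

/-- For `u = (u₁, u₂, u₃) ∈ ℝ³` and `k = (0, 0, 1)`, the cross product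
`k × u = (−u₂, u₁, 0)`. -/
noncomputable def kcross (v : EuclideanSpace ℝ (Fin 3)) : EuclideanSpace ℝ (Fin 3) :=
  WithLp.toLp 2 ![-(v 1), v 0, 0]

/-- The vertical vector field `(0, 0, s) ∈ ℝ³`. -/
noncomputable def vert (s : ℝ) : EuclideanSpace ℝ (Fin 3) :=
  WithLp.toLp 2 ![0, 0, s]

lemma inner_vert (w : EuclideanSpace ℝ (Fin 3)) (s : ℝ) :
    ⟪w, vert s⟫ = w 2 * s := by
  simp [PiLp.inner_apply, RCLike.inner_apply, vert, Fin.sum_univ_three, mul_comm]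

/-- The three-dimensional embedding lemma underlying the paper's optimal balance
theorem for the linearised rotating Euler–Boussinesq equations: discrete hydrostatic
and geostrophic balance in a finite element pair satisfying the embedding conditions
implies pointwise balance `f k × u = −(1/ρ₀) ∇p + γ T k` almost everywhere on `Ω`;
componentwise, geostrophic balance `−f u₂ = −(1/ρ₀) p_x`, `f u₁ = −(1/ρ₀) p_y` and
hydrostatic balance `(1/ρ₀) p_z = γ T` hold a.e. -/
theorem hydrostatic_geostrophic_embedding_lemma
    (Ω : Set (EuclideanSpace ℝ (Fin 3))) (hΩ : MeasurableSet Ω)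
    (V : Submodule ℝ (EuclideanSpace ℝ (Fin 3) → EuclideanSpace ℝ (Fin 3)))
    (hV : ∀ w ∈ V, MemLp w 2 (volume.restrict Ω))
    (hVk : ∀ w ∈ V, (fun x => kcross (w x)) ∈ V)
    (p : EuclideanSpace ℝ (Fin 3) → ℝ)
    (hp : ∀ x ∈ Ω, DifferentiableAt ℝ p x)
    (hgradV : ∃ gp ∈ V, gp =ᵐ[volume.restrict Ω] fun x => gradient p x)
    (T : EuclideanSpace ℝ (Fin 3) → ℝ) (hT : MemLp T 2 (volume.restrict Ω))
    (hTV : (fun x => vert (T x)) ∈ V)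
    (u : EuclideanSpace ℝ (Fin 3) → EuclideanSpace ℝ (Fin 3)) (hu : u ∈ V)
    (f γ ρ₀ : ℝ) (hρ₀ : 0 < ρ₀)
    (hbal : ∀ w ∈ V,
      f * ∫ x in Ω, ⟪w x, kcross (u x)⟫ =
        -((1 / ρ₀) * ∫ x in Ω, ⟪w x, gradient p x⟫)
          + γ * ∫ x in Ω, w x 2 * T x) :
    ∀ᵐ x ∂(volume.restrict Ω),
      f • kcross (u x) = -((1 / ρ₀) • gradient p x) + γ • vert (T x) ∧
      -(f * u x 1) = -((1 / ρ₀) * gradient p x 0) ∧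
      f * u x 0 = -((1 / ρ₀) * gradient p x 1) ∧
      (1 / ρ₀) * gradient p x 2 = γ * T x := by
  obtain ⟨gp, hgpV, hgp⟩ := hgradV
  set μ := volume.restrict Ω with hμ
  set c : ℝ := 1 / ρ₀ with hc
  set w₀ : EuclideanSpace ℝ (Fin 3) → EuclideanSpace ℝ (Fin 3) :=
    fun x => f • kcross (u x) + c • gp x - γ • vert (T x) with hw₀
  have hw₀V : w₀ ∈ V :=
    V.sub_mem (V.add_mem (V.smul_mem f (hVk u hu)) (V.smul_mem c hgpV)) (V.smul_mem γ hTV)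
  have hw₀2 : MemLp w₀ 2 μ := hV _ hw₀V
  have hk2 : MemLp (fun x => kcross (u x)) 2 μ := hV _ (hVk u hu)
  have hg2 : MemLp (fun x => gradient p x) 2 μ := (hV _ hgpV).ae_eq hgp
  have hv2 : MemLp (fun x => vert (T x)) 2 μ := hV _ hTV
  have i1 : Integrable (fun x => ⟪w₀ x, kcross (u x)⟫) μ := integrable_inner_of_memL2 hw₀2 hk2
  have i2 : Integrable (fun x => ⟪w₀ x, gradient p x⟫) μ := integrable_inner_of_memL2 hw₀2 hg2
  have i3 : Integrable (fun x => ⟪w₀ x, vert (T x)⟫) μ := integrable_inner_of_memL2 hw₀2 hv2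
  have hsplit : ∫ x, ⟪w₀ x, w₀ x⟫ ∂μ
      = f * (∫ x, ⟪w₀ x, kcross (u x)⟫ ∂μ) + c * (∫ x, ⟪w₀ x, gradient p x⟫ ∂μ)
        - γ * (∫ x, ⟪w₀ x, vert (T x)⟫ ∂μ) := by
    have i12 : Integrable
        (fun x => f * ⟪w₀ x, kcross (u x)⟫ + c * ⟪w₀ x, gradient p x⟫) μ :=
      (i1.const_mul f).add (i2.const_mul c)
    rw [← integral_const_mul f, ← integral_const_mul c, ← integral_const_mul γ,
      ← integral_add (i1.const_mul f) (i2.const_mul c),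
      ← integral_sub i12 (i3.const_mul γ)]
    refine integral_congr_ae ?_
    filter_upwards [hgp] with x hx
    have hxw : w₀ x = f • kcross (u x) + c • gradient p x - γ • vert (T x) := by
      rw [hw₀]; simp only; rw [hx]
    rw [hxw]
    simp only [inner_sub_right, inner_add_right, real_inner_smul_right, smul_eq_mul]
  have hzero : ∫ x, ⟪w₀ x, w₀ x⟫ ∂μ = 0 := by
    have hb := hbal w₀ hw₀V
    have h3 : (∫ x, ⟪w₀ x, vert (T x)⟫ ∂μ) = ∫ x, w₀ x 2 * T x ∂μ :=
      integral_congr_ae (Filter.Eventually.of_forall fun x => inner_vert _ _)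
    rw [hsplit, h3]
    rw [hμ] at *
    linarith [hb]
  have hae : ∀ᵐ x ∂μ, ⟪w₀ x, w₀ x⟫ = 0 := by
    have hnn : 0 ≤ᵐ[μ] fun x => ⟪w₀ x, w₀ x⟫ :=
      Filter.Eventually.of_forall fun x => real_inner_self_nonneg
    exact (integral_eq_zero_iff_of_nonneg_ae hnn
      (integrable_inner_of_memL2 hw₀2 hw₀2)).mp hzero
  filter_upwards [hae, hgp] with x hx hgx
  have hw0 : w₀ x = 0 := inner_self_eq_zero.mp hx
  have hmain : f • kcross (u x) = -(c • gradient p x) + γ • vert (T x) := by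
    have hsum : f • kcross (u x) + c • gradient p x - γ • vert (T x) = 0 := by
      have hxw : w₀ x = f • kcross (u x) + c • gradient p x - γ • vert (T x) := by
        rw [hw₀]; simp only; rw [hgx]
      rw [← hxw]; exact hw0
    rw [show -(c • gradient p x) + γ • vert (T x)
        = f • kcross (u x) - (f • kcross (u x) + c • gradient p x - γ • vert (T x)) by abel,
      hsum, sub_zero]
  refine ⟨hmain, ?_, ?_, ?_⟩
  · simpa [kcross, vert, PiLp.smul_apply, PiLp.add_apply, PiLp.neg_apply] using congrArg (fun v : EuclideanSpace ℝ (Fin 3) => v 0) hmain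
  · simpa [kcross, vert, PiLp.smul_apply, PiLp.add_apply, PiLp.neg_apply] using congrArg (fun v : EuclideanSpace ℝ (Fin 3) => v 1) hmain
  · have h2 := congrArg (fun v : EuclideanSpace ℝ (Fin 3) => v 2) hmain
    simp [kcross, vert, PiLp.smul_apply, PiLp.add_apply, PiLp.neg_apply] at h2
    linarith
end

section
/- Let B = [a₁, b₁] × [a₂, b₂] × [a₃, b₃] ⊆ ℝ³ with a_i < b_i. Let φ : ℝ³ → ℝ be continuously differentiable on an open neighborhood of B and let ψ : ℝ³ → ℝ be twice continuously differentiable on an open neighborhood of B. Suppose the horizontal tangential derivative of ψ vanishes on the lateral boundary of B: ∂ψ/∂y = 0 on the faces {x = a₁} ∩ B and {x = b₁} ∩ B, and ∂ψ/∂x = 0 on the faces {y = a₂} ∩ B and {y = b₂} ∩ B. Then ∫_B ( (∂φ/∂x)(∂ψ/∂y) − (∂φ/∂y)(∂ψ/∂x) ) dV = 0. -/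
open MeasureTheory

/-- Symmetric Fubini for set integrals. -/
lemma setIntegral_prod_symm'' {α β E : Type*} [MeasurableSpace α] [MeasurableSpace β]
    [NormedAddCommGroup E] [NormedSpace ℝ E] {μ : Measure α} {ν : Measure β}
    [SFinite μ] [SFinite ν] (f : α × β → E) {s : Set α} {t : Set β}
    (hf : IntegrableOn f (s ×ˢ t) (μ.prod ν)) :
    ∫ z in s ×ˢ t, f z ∂μ.prod ν = ∫ y in t, ∫ x in s, f (x, y) ∂μ ∂ν := by
  rw [IntegrableOn, ← Measure.prod_restrict s t] at hf
  rw [← Measure.prod_restrict s t]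
  exact integral_prod_symm f hf

/-- The three-dimensional vanishing Jacobian integral used in the proof of the paper's
optimal balance theorem for three-dimensional incompressible flow: on a box
`B = [a₁,b₁] × [a₂,b₂] × [a₃,b₃]`, if `φ` is `C¹` near `B`, `ψ` is `C²` near `B`, and
the horizontal tangential derivative of `ψ` vanishes on the lateral boundary of `B`
(`ψ_y = 0` on the faces `x = a₁`, `x = b₁` and `ψ_x = 0` on the faces `y = a₂`,
`y = b₂`), then `∫_B (φ_x ψ_y − φ_y ψ_x) dV = 0`. -/
theorem jacobian_integral_box
    (a₁ b₁ a₂ b₂ a₃ b₃ : ℝ) (h1 : a₁ < b₁) (h2 : a₂ < b₂) (h3 : a₃ < b₃)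
    (B : Set (ℝ × ℝ × ℝ))
    (hB : B = Set.Icc a₁ b₁ ×ˢ Set.Icc a₂ b₂ ×ˢ Set.Icc a₃ b₃)
    (φ ψ : ℝ × ℝ × ℝ → ℝ)
    (hφ : ∃ U : Set (ℝ × ℝ × ℝ), IsOpen U ∧ B ⊆ U ∧ ContDiffOn ℝ 1 φ U)
    (hψ : ∃ U : Set (ℝ × ℝ × ℝ), IsOpen U ∧ B ⊆ U ∧ ContDiffOn ℝ 2 ψ U)
    (hbc1 : ∀ q ∈ B, (q.1 = a₁ ∨ q.1 = b₁) → fderiv ℝ ψ q (0, 1, 0) = 0)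
    (hbc2 : ∀ q ∈ B, (q.2.1 = a₂ ∨ q.2.1 = b₂) → fderiv ℝ ψ q (1, 0, 0) = 0) :
    ∫ q in B, (fderiv ℝ φ q (1, 0, 0) * fderiv ℝ ψ q (0, 1, 0)
      - fderiv ℝ φ q (0, 1, 0) * fderiv ℝ ψ q (1, 0, 0)) = 0 := by
  obtain ⟨U, hUo, hBU, hφU⟩ := hφ
  obtain ⟨V, hVo, hBV, hψV⟩ := hψ
  set W : Set (ℝ × ℝ × ℝ) := U ∩ V with hWdef
  have hWo : IsOpen W := hUo.inter hVo
  have hBW : B ⊆ W := Set.subset_inter hBU hBV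
  have hφW : ContDiffOn ℝ 1 φ W := hφU.mono Set.inter_subset_left
  have hψW : ContDiffOn ℝ 2 ψ W := hψV.mono Set.inter_subset_right
  set e₁ : ℝ × ℝ × ℝ := (1, 0, 0) with he₁
  set e₂ : ℝ × ℝ × ℝ := (0, 1, 0) with he₂
  set ψ₁ : ℝ × ℝ × ℝ → ℝ := fun q => fderiv ℝ ψ q e₁ with hψ₁
  set ψ₂ : ℝ × ℝ × ℝ → ℝ := fun q => fderiv ℝ ψ q e₂ with hψ₂
  set Hm : ℝ × ℝ × ℝ → ℝ := fun q => fderiv ℝ (fderiv ℝ ψ) q e₁ e₂ with hHm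
  set Km : ℝ × ℝ × ℝ → ℝ := fun q => fderiv ℝ (fderiv ℝ ψ) q e₂ e₁ with hKm
  set D : ℝ × ℝ × ℝ → ℝ := fun q => fderiv ℝ φ q e₁ * ψ₂ q + φ q * Hm q with hD
  set E : ℝ × ℝ × ℝ → ℝ := fun q => fderiv ℝ φ q e₂ * ψ₁ q + φ q * Km q with hE
  -- continuity facts
  have hfψ : ContDiffOn ℝ 1 (fderiv ℝ ψ) W := hψW.fderiv_of_isOpen hWo (by norm_num)
  have hcψ' : ContinuousOn (fderiv ℝ ψ) W := hfψ.continuousOn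
  have hcψ'' : ContinuousOn (fderiv ℝ (fderiv ℝ ψ)) W :=
    hfψ.continuousOn_fderiv_of_isOpen hWo le_rfl
  have hcφ' : ContinuousOn (fderiv ℝ φ) W := hφW.continuousOn_fderiv_of_isOpen hWo le_rfl
  have hcφ : ContinuousOn φ W := hφW.continuousOn
  have hcψ₁ : ContinuousOn ψ₁ W :=
    (ContinuousLinearMap.apply ℝ ℝ e₁).continuous.comp_continuousOn hcψ'
  have hcψ₂ : ContinuousOn ψ₂ W :=
    (ContinuousLinearMap.apply ℝ ℝ e₂).continuous.comp_continuousOn hcψ'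
  have hcHm : ContinuousOn Hm W :=
    (ContinuousLinearMap.apply ℝ ℝ e₂).continuous.comp_continuousOn
      ((ContinuousLinearMap.apply ℝ ((ℝ × ℝ × ℝ) →L[ℝ] ℝ) e₁).continuous.comp_continuousOn hcψ'')
  have hcKm : ContinuousOn Km W :=
    (ContinuousLinearMap.apply ℝ ℝ e₁).continuous.comp_continuousOn
      ((ContinuousLinearMap.apply ℝ ((ℝ × ℝ × ℝ) →L[ℝ] ℝ) e₂).continuous.comp_continuousOn hcψ'')
  have hcφ₁ : ContinuousOn (fun q => fderiv ℝ φ q e₁) W :=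
    (ContinuousLinearMap.apply ℝ ℝ e₁).continuous.comp_continuousOn hcφ'
  have hcφ₂ : ContinuousOn (fun q => fderiv ℝ φ q e₂) W :=
    (ContinuousLinearMap.apply ℝ ℝ e₂).continuous.comp_continuousOn hcφ'
  have hcD : ContinuousOn D W := (hcφ₁.mul hcψ₂).add (hcφ.mul hcHm)
  have hcE : ContinuousOn E W := (hcφ₂.mul hcψ₁).add (hcφ.mul hcKm)
  have hBcompact : IsCompact B := by
    rw [hB]; exact isCompact_Icc.prod (isCompact_Icc.prod isCompact_Icc)
  have hBmeas : MeasurableSet B := hBcompact.measurableSet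
  -- pointwise differentiability
  have hφdiff : ∀ q ∈ W, HasFDerivAt φ (fderiv ℝ φ q) q := fun q hq =>
    (((hφW q hq).contDiffAt (hWo.mem_nhds hq)).differentiableAt one_ne_zero).hasFDerivAt
  have hψ'diff : ∀ q ∈ W, HasFDerivAt (fderiv ℝ ψ) (fderiv ℝ (fderiv ℝ ψ) q) q := fun q hq =>
    (((hfψ q hq).contDiffAt (hWo.mem_nhds hq)).differentiableAt one_ne_zero).hasFDerivAt
  have hsym : ∀ q ∈ W, Hm q = Km q := fun q hq =>
    (((hψW q hq).contDiffAt (hWo.mem_nhds hq)).isSymmSndFDerivAt (by simp)).eq e₁ e₂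
  -- derivative of ψ-directional-derivatives in a direction
  have hψdir : ∀ v : ℝ × ℝ × ℝ, ∀ q ∈ W,
      HasFDerivAt (fun q => fderiv ℝ ψ q v)
        ((ContinuousLinearMap.apply ℝ ℝ v).comp (fderiv ℝ (fderiv ℝ ψ) q)) q := by
    intro v q hq
    exact (ContinuousLinearMap.apply ℝ ℝ v).hasFDerivAt.comp q (hψ'diff q hq)
  -- derivative facts along x-lines
  have hlineX : ∀ p : ℝ × ℝ, ∀ x : ℝ, (x, p) ∈ W →
      HasDerivAt (fun x : ℝ => φ (x, p) * ψ₂ (x, p)) (D (x, p)) x := by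
    intro p x hq
    have hl : HasDerivAt (fun x : ℝ => ((x, p) : ℝ × ℝ × ℝ)) e₁ x :=
      HasDerivAt.prodMk (hasDerivAt_id x) (hasDerivAt_const x p)
    have h1 : HasDerivAt (fun x : ℝ => φ (x, p)) (fderiv ℝ φ (x, p) e₁) x :=
      (hφdiff _ hq).comp_hasDerivAt x hl
    have h2 : HasDerivAt (fun x : ℝ => ψ₂ (x, p)) (Hm (x, p)) x := by
      have := ((by have h := (hψdir e₂ _ hq).comp_hasDerivAt x hl; exact h) :
        HasDerivAt (fun x : ℝ => ψ₂ (x, p))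
          (((ContinuousLinearMap.apply ℝ ℝ e₂).comp (fderiv ℝ (fderiv ℝ ψ) (x, p))) e₁) x)
      simpa using this
    exact h1.mul h2
  -- derivative facts along y-lines
  have hlineY : ∀ x z : ℝ, ∀ y : ℝ, (x, y, z) ∈ W →
      HasDerivAt (fun y : ℝ => φ (x, y, z) * ψ₁ (x, y, z)) (E (x, y, z)) y := by
    intro x z y hq
    have hl : HasDerivAt (fun y : ℝ => ((x, y, z) : ℝ × ℝ × ℝ)) e₂ y :=
      HasDerivAt.prodMk (hasDerivAt_const y x) (HasDerivAt.prodMk (hasDerivAt_id y) (hasDerivAt_const y z))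
    have h1 : HasDerivAt (fun y : ℝ => φ (x, y, z)) (fderiv ℝ φ (x, y, z) e₂) y :=
      (hφdiff _ hq).comp_hasDerivAt y hl
    have h2 : HasDerivAt (fun y : ℝ => ψ₁ (x, y, z)) (Km (x, y, z)) y := by
      have := ((by have h := (hψdir e₁ _ hq).comp_hasDerivAt y hl; exact h) :
        HasDerivAt (fun y : ℝ => ψ₁ (x, y, z))
          (((ContinuousLinearMap.apply ℝ ℝ e₁).comp (fderiv ℝ (fderiv ℝ ψ) (x, y, z))) e₂) y)
      simpa using this
    exact h1.mul h2
  -- integrability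
  have hDint : IntegrableOn D B := (hcD.mono hBW).integrableOn_compact hBcompact
  have hEint : IntegrableOn E B := (hcE.mono hBW).integrableOn_compact hBcompact
  -- the D-integral vanishes
  have hDzero : ∫ q in B, D q = 0 := by
    rw [hB] at hDint ⊢
    rw [MeasureTheory.Measure.volume_eq_prod] at hDint ⊢
    rw [setIntegral_prod_symm'' D hDint]
    apply setIntegral_eq_zero_of_forall_eq_zero
    intro p hp
    have hmem : ∀ x ∈ Set.uIcc a₁ b₁, ((x, p) : ℝ × ℝ × ℝ) ∈ B := by
      intro x hx
      rw [Set.uIcc_of_le h1.le] at hx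
      rw [hB]; exact ⟨hx, hp⟩
    have hderiv : ∀ x ∈ Set.uIcc a₁ b₁,
        HasDerivAt (fun x : ℝ => φ (x, p) * ψ₂ (x, p)) (D (x, p)) x :=
      fun x hx => hlineX p x (hBW (hmem x hx))
    have hintI : IntervalIntegrable (fun x : ℝ => D (x, p)) volume a₁ b₁ := by
      apply ContinuousOn.intervalIntegrable
      exact hcD.comp (Continuous.continuousOn (continuous_id.prodMk continuous_const))
        (fun x hx => hBW (hmem x hx))
    rw [MeasureTheory.integral_Icc_eq_integral_Ioc,
      ← intervalIntegral.integral_of_le h1.le,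
      intervalIntegral.integral_eq_sub_of_hasDerivAt hderiv hintI]
    have z1 : ψ₂ (b₁, p) = 0 :=
      hbc1 (b₁, p) (hmem b₁ (Set.right_mem_uIcc)) (Or.inr rfl)
    have z2 : ψ₂ (a₁, p) = 0 :=
      hbc1 (a₁, p) (hmem a₁ (Set.left_mem_uIcc)) (Or.inl rfl)
    rw [z1, z2]; ring
  -- the E-integral vanishes
  have hEzero : ∫ q in B, E q = 0 := by
    rw [hB] at hEint ⊢
    rw [MeasureTheory.Measure.volume_eq_prod] at hEint ⊢
    rw [setIntegral_prod E hEint]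
    apply setIntegral_eq_zero_of_forall_eq_zero
    intro x hx
    have hint2 : IntegrableOn (fun p : ℝ × ℝ => E (x, p)) (Set.Icc a₂ b₂ ×ˢ Set.Icc a₃ b₃) := by
      apply ContinuousOn.integrableOn_compact (isCompact_Icc.prod isCompact_Icc)
      exact hcE.comp (Continuous.continuousOn (continuous_const.prodMk continuous_id))
        (fun p hp => hBW (by rw [hB]; exact ⟨hx, hp⟩))
    rw [MeasureTheory.Measure.volume_eq_prod] at hint2 ⊢
    rw [setIntegral_prod_symm'' _ hint2]
    apply setIntegral_eq_zero_of_forall_eq_zero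
    intro z hz
    have hmem : ∀ y ∈ Set.uIcc a₂ b₂, ((x, y, z) : ℝ × ℝ × ℝ) ∈ B := by
      intro y hy
      rw [Set.uIcc_of_le h2.le] at hy
      rw [hB]; exact ⟨hx, hy, hz⟩
    have hderiv : ∀ y ∈ Set.uIcc a₂ b₂,
        HasDerivAt (fun y : ℝ => φ (x, y, z) * ψ₁ (x, y, z)) (E (x, y, z)) y :=
      fun y hy => hlineY x z y (hBW (hmem y hy))
    have hintI : IntervalIntegrable (fun y : ℝ => E (x, y, z)) volume a₂ b₂ := by
      apply ContinuousOn.intervalIntegrable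
      exact hcE.comp (Continuous.continuousOn
          (continuous_const.prodMk (continuous_id.prodMk continuous_const)))
        (fun y hy => hBW (hmem y hy))
    rw [MeasureTheory.integral_Icc_eq_integral_Ioc,
      ← intervalIntegral.integral_of_le h2.le,
      intervalIntegral.integral_eq_sub_of_hasDerivAt hderiv hintI]
    have z1 : ψ₁ (x, b₂, z) = 0 :=
      hbc2 (x, b₂, z) (hmem b₂ (Set.right_mem_uIcc)) (Or.inr rfl)
    have z2 : ψ₁ (x, a₂, z) = 0 :=
      hbc2 (x, a₂, z) (hmem a₂ (Set.left_mem_uIcc)) (Or.inl rfl)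
    rw [z1, z2]; ring
  -- combine
  have hEqOn : Set.EqOn
      (fun q => fderiv ℝ φ q (1, 0, 0) * fderiv ℝ ψ q (0, 1, 0)
        - fderiv ℝ φ q (0, 1, 0) * fderiv ℝ ψ q (1, 0, 0))
      (fun q => D q - E q) B := by
    intro q hq
    have hs := hsym q (hBW hq)
    simp only [hD, hE, hψ₁, hψ₂, he₁, he₂] at hs ⊢
    rw [hs]; ring
  rw [MeasureTheory.setIntegral_congr_fun hBmeas hEqOn,
    MeasureTheory.integral_sub hDint hEint, hDzero, hEzero, sub_zero]
end

section
/- Let Ω ⊆ ℝⁿ be a measurable set and V a linear subspace of L²(Ω; ℝⁿ). Let p : ℝⁿ → ℝ be differentiable on Ω with the equivalence class of ∇p restricted to Ω belonging to V, let r ∈ V, and let q ∈ V satisfy ∫_Ω w · q dV = ∫_Ω w · ∇p dV for every w ∈ V and ∫_Ω ∇φ · q dV = −∫_Ω ∇φ · r dV for every φ in a set H of functions differentiable on Ω whose gradients (restricted to Ω) lie in V. Then ∫_Ω ∇φ · ∇p dV = −∫_Ω ∇φ · r dV for every φ ∈ H. -/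
open MeasureTheory RealInnerProductSpace

/-- The paper's Optimal Sparsity of the Pressure Matrix theorem: in the mixed finite
element discretisation of the pressure Poisson equation, if the embedding condition
`∇H ⊆ V` holds (for the pressure `p` and all test functions `φ ∈ H`), then the mixed
system (with auxiliary discrete gradient `q` and right-hand side `r`) reduces to the
usual single-matrix Galerkin discretisation `∫_Ω ∇φ · ∇p dV = −∫_Ω ∇φ · r dV`. -/
theorem optimal_sparsity_pressure_matrix
    (n : ℕ)
    (Ω : Set (EuclideanSpace ℝ (Fin n))) (hΩ : MeasurableSet Ω)
    (V : Submodule ℝ (EuclideanSpace ℝ (Fin n) → EuclideanSpace ℝ (Fin n)))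
    (hV : ∀ w ∈ V, MemLp w 2 (volume.restrict Ω))
    (H : Set (EuclideanSpace ℝ (Fin n) → ℝ))
    (hH : ∀ φ ∈ H, (∀ x ∈ Ω, DifferentiableAt ℝ φ x) ∧
      ∃ gφ ∈ V, gφ =ᵐ[volume.restrict Ω] fun x => gradient φ x)
    (p : EuclideanSpace ℝ (Fin n) → ℝ)
    (hp : ∀ x ∈ Ω, DifferentiableAt ℝ p x)
    (hgradp : ∃ gp ∈ V, gp =ᵐ[volume.restrict Ω] fun x => gradient p x)
    (r : EuclideanSpace ℝ (Fin n) → EuclideanSpace ℝ (Fin n)) (hr : r ∈ V)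
    (q : EuclideanSpace ℝ (Fin n) → EuclideanSpace ℝ (Fin n)) (hq : q ∈ V)
    (hq1 : ∀ w ∈ V, ∫ x in Ω, ⟪w x, q x⟫ = ∫ x in Ω, ⟪w x, gradient p x⟫)
    (hq2 : ∀ φ ∈ H, ∫ x in Ω, ⟪gradient φ x, q x⟫ = -∫ x in Ω, ⟪gradient φ x, r x⟫) :
    ∀ φ ∈ H, ∫ x in Ω, ⟪gradient φ x, gradient p x⟫ = -∫ x in Ω, ⟪gradient φ x, r x⟫ := by
  intro φ hφ
  obtain ⟨gφ, hgφV, hgφ⟩ := (hH φ hφ).2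
  have h1 : ∫ x in Ω, ⟪gφ x, gradient p x⟫ = ∫ x in Ω, ⟪gradient φ x, gradient p x⟫ :=
    integral_congr_ae (hgφ.mono fun x hx => by simp only [hx])
  have h2 : ∫ x in Ω, ⟪gφ x, q x⟫ = ∫ x in Ω, ⟪gradient φ x, q x⟫ :=
    integral_congr_ae (hgφ.mono fun x hx => by simp only [hx])
  rw [← h1, ← hq1 gφ hgφV, h2, hq2 φ hφ]
end
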